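/- Consider the profile on n ≥ 4 alternatives with single comparisons: X_1 beats X_3, X_3 beats X_4, and X_2 beats X_4 (all maximal wins), and no other comparisons. Then any weak order ρ satisfying Self-Consistent Monotonicity must satisfy X_1 ≻_ρ X_2 ≻_ρ X_3 ≻_ρ X_4. -/
import Mathlib


open scoped Classical

/-- The Copeland index of alternative `i` in a binary relation `r` on `Fin n`. -/
noncomputable def copeland {n : ℕ} (r : Fin n → Fin n → Prop) (i : Fin n) : ℤ :=
  (({j | r i j} : Set (Fin n)).ncard : ℤ) - (({j | r j i} : Set (Fin n)).ncard : ℤ)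

/-- A weak order: a complete and transitive binary relation. -/
def IsWeakOrder {n : ℕ} (r : Fin n → Fin n → Prop) : Prop :=
  (∀ i j, r i j ∨ r j i) ∧ Transitive r

/-- A linear order: an antisymmetric weak order. -/
def IsLinearOrderRel {n : ℕ} (r : Fin n → Fin n → Prop) : Prop :=
  IsWeakOrder r ∧ ∀ i j, r i j → r j i → i = j

/-- An array of `m` incomplete paired comparison `n × n` matrices with entries in
`[rmin, rmax]`: `defined p i j` says that the entry `r_{ij}^p` is defined, in which
case its value is `val p i j`. -/
structure Profile (rmin rmax : ℝ) (n m : ℕ) where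
  defined : Fin m → Fin n → Fin n → Prop
  val : Fin m → Fin n → Fin n → ℝ
  defined_symm : ∀ p i j, defined p i j → defined p j i
  defined_irrefl : ∀ p i, ¬ defined p i i
  val_mem : ∀ p i j, defined p i j → rmin ≤ val p i j ∧ val p i j ≤ rmax

variable {rmin rmax : ℝ} {n m : ℕ}

/-- The comparison outcomes of alternative `i`: indices `(p, k)` such that the
comparison of `Xᵢ` with `X_k` in the `p`-th matrix is defined. -/
def Out (P : Profile rmin rmax n m) (i : Fin n) : Type :=
  {x : Fin m × Fin n // P.defined x.1 i x.2}

/-- Outcome `o` of `Xᵢ` is not weaker, w.r.t. the scores `w`, than outcome `o'` of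
`Xⱼ`: `r_{ik}^p ≥ r_{jℓ}^q`, `r_{ki}^p ≤ r_{ℓj}^q`, and the opponent of `o` is
ranked at least as high as the opponent of `o'`. -/
def NotWeaker (P : Profile rmin rmax n m) (w : Fin n → ℝ) {i j : Fin n}
    (o : Out P i) (o' : Out P j) : Prop :=
  P.val o.1.1 i o.1.2 ≥ P.val o'.1.1 j o'.1.2 ∧
  P.val o.1.1 o.1.2 i ≤ P.val o'.1.1 o'.1.2 j ∧
  w o.1.2 ≥ w o'.1.2

/-- Outcome `o` of `Xᵢ` is stronger than outcome `o'` of `Xⱼ` w.r.t. `w`: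
not weaker, and at least one of the three relations is strict. -/
def Stronger (P : Profile rmin rmax n m) (w : Fin n → ℝ) {i j : Fin n}
    (o : Out P i) (o' : Out P j) : Prop :=
  NotWeaker P w o o' ∧
    (P.val o.1.1 i o.1.2 > P.val o'.1.1 j o'.1.2 ∨
     P.val o.1.1 o.1.2 i < P.val o'.1.1 o'.1.2 j ∨
     w o.1.2 > w o'.1.2)

/-- Self-Consistency of the ranking given by the scores `w` for the profile `P`:
whenever there is a one-to-one correspondence between the comparison outcomes of
`Xᵢ` and those of `Xⱼ` under which each outcome of `Xᵢ` is not weaker than the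
corresponding outcome of `Xⱼ`, then `Xᵢ` is ranked at least as high as `Xⱼ`;
strictly higher if moreover some outcome of `Xᵢ` is stronger. -/
def SelfConsistentAt (P : Profile rmin rmax n m) (w : Fin n → ℝ) : Prop :=
  ∀ i j : Fin n, ∀ e : Out P i ≃ Out P j,
    (∀ o : Out P i, NotWeaker P w o (e o)) →
      w i ≥ w j ∧ ((∃ o : Out P i, Stronger P w o (e o)) → w i > w j)

/-- `o` is a maximal win: the outcome is `(rmax, rmin)`. -/
def IsMaxWin (P : Profile rmin rmax n m) {i : Fin n} (o : Out P i) : Prop :=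
  P.val o.1.1 i o.1.2 = rmax ∧ P.val o.1.1 o.1.2 i = rmin

/-- `o` is a maximal loss: the outcome is `(rmin, rmax)`. -/
def IsMaxLoss (P : Profile rmin rmax n m) {i : Fin n} (o : Out P i) : Prop :=
  P.val o.1.1 i o.1.2 = rmin ∧ P.val o.1.1 o.1.2 i = rmax

/-- Self-Consistent Monotonicity (SCM) of the ranking given by the scores `w`:
if the outcome sets split as `R_i = R_i' ∪ R_i''`, `R_j = R_j' ∪ R_j''` where
`R_i''` consists of maximal wins, `R_j''` of maximal losses, and a one-to-one
correspondence `R_i' → R_j'` matches each outcome of `Xᵢ` with a not-weaker one of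
`Xⱼ`, then `Xᵢ` is ranked at least as high as `Xⱼ`; strictly higher if moreover
some matched outcome is stronger, or `R_i'' ≠ ∅`, or `R_j'' ≠ ∅`. -/
def SCM (P : Profile rmin rmax n m) (w : Fin n → ℝ) : Prop :=
  ∀ i j : Fin n, ∀ (A : Set (Out P i)) (B : Set (Out P j)),
    (∀ o : Out P i, o ∉ A → IsMaxWin P o) →
    (∀ o : Out P j, o ∉ B → IsMaxLoss P o) →
    ∀ e : A ≃ B, (∀ o : A, NotWeaker P w o.1 (e o).1) →
      w i ≥ w j ∧
      (((∃ o : A, Stronger P w o.1 (e o).1) ∨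
          (∃ o : Out P i, o ∉ A) ∨ (∃ o : Out P j, o ∉ B)) → w i > w j)


/-- Equivalence between two empty subsets. -/
def emptySetEquiv {α β : Type*} : ((∅ : Set α) : Type _) ≃ ((∅ : Set β) : Type _) where
  toFun o := absurd o.2 (Set.notMem_empty _)
  invFun o := absurd o.2 (Set.notMem_empty _)
  left_inv o := absurd o.2 (Set.notMem_empty _)
  right_inv o := absurd o.2 (Set.notMem_empty _)

/-- Equivalence between two singleton subsets. -/
def singSetEquiv {α β : Type*} (x : α) (y : β) :
    (({x} : Set α) : Type _) ≃ (({y} : Set β) : Type _) where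
  toFun _ := ⟨y, rfl⟩
  invFun _ := ⟨x, rfl⟩
  left_inv o := Subtype.ext o.2.symm
  right_inv o := Subtype.ext o.2.symm

/-- For the profile with single maximal-win comparisons `X₁ → X₃`, `X₃ → X₄`,
`X₂ → X₄` (and no other comparisons) on `n ≥ 4` alternatives, every weak order
satisfying Self-Consistent Monotonicity ranks `X₁ ≻ X₂ ≻ X₃ ≻ X₄`. -/
theorem stmt10 (n : ℕ) (hn : 4 ≤ n) (rmin rmax : ℝ) (hr : rmin < rmax)
    (P : Profile rmin rmax n 1)
    (a b c d : Fin n) (ha : a.val = 0) (hb : b.val = 1) (hc : c.val = 2) (hd4 : d.val = 3)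
    (hdef : ∀ p (i j : Fin n), P.defined p i j ↔
      ((i = a ∧ j = c) ∨ (i = c ∧ j = a) ∨ (i = c ∧ j = d) ∨ (i = d ∧ j = c) ∨
       (i = b ∧ j = d) ∨ (i = d ∧ j = b)))
    (hv : ∀ p (i j : Fin n), (i = a ∧ j = c) ∨ (i = c ∧ j = d) ∨ (i = b ∧ j = d) →
      P.val p i j = rmax ∧ P.val p j i = rmin) :
    ∀ r : Fin n → Fin n → Prop, IsWeakOrder r →
      SCM P (fun i => (copeland r i : ℝ)) →
      copeland r a > copeland r b ∧ copeland r b > copeland r c ∧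
        copeland r c > copeland r d := by

  intro r _hw hscm
  have hab : a ≠ b := fun h => by rw [Fin.ext_iff, ha, hb] at h; omega
  have hac : a ≠ c := fun h => by rw [Fin.ext_iff, ha, hc] at h; omega
  have had : a ≠ d := fun h => by rw [Fin.ext_iff, ha, hd4] at h; omega
  have hbc : b ≠ c := fun h => by rw [Fin.ext_iff, hb, hc] at h; omega
  have hbd : b ≠ d := fun h => by rw [Fin.ext_iff, hb, hd4] at h; omega
  have hcd : c ≠ d := fun h => by rw [Fin.ext_iff, hc, hd4] at h; omega
  have dac : P.defined 0 a c := (hdef 0 a c).2 (Or.inl ⟨rfl, rfl⟩)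
  have dca : P.defined 0 c a := (hdef 0 c a).2 (Or.inr (Or.inl ⟨rfl, rfl⟩))
  have dcd : P.defined 0 c d := (hdef 0 c d).2 (Or.inr (Or.inr (Or.inl ⟨rfl, rfl⟩)))
  have ddc : P.defined 0 d c := (hdef 0 d c).2 (Or.inr (Or.inr (Or.inr (Or.inl ⟨rfl, rfl⟩))))
  have dbd : P.defined 0 b d := (hdef 0 b d).2 (Or.inr (Or.inr (Or.inr (Or.inr (Or.inl ⟨rfl, rfl⟩)))))
  have ddb : P.defined 0 d b := (hdef 0 d b).2 (Or.inr (Or.inr (Or.inr (Or.inr (Or.inr ⟨rfl, rfl⟩)))))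
  obtain ⟨vac, vca⟩ := hv 0 a c (Or.inl ⟨rfl, rfl⟩)
  obtain ⟨vcd, vdc⟩ := hv 0 c d (Or.inr (Or.inl ⟨rfl, rfl⟩))
  obtain ⟨vbd, vdb⟩ := hv 0 b d (Or.inr (Or.inr ⟨rfl, rfl⟩))
  let oa : Out P a := ⟨(0, c), dac⟩
  let ob : Out P b := ⟨(0, d), dbd⟩
  let oca : Out P c := ⟨(0, a), dca⟩
  let ocd : Out P c := ⟨(0, d), dcd⟩
  let odc : Out P d := ⟨(0, c), ddc⟩
  let odb : Out P d := ⟨(0, b), ddb⟩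
  set w : Fin n → ℝ := fun i => ((copeland r i : ℤ) : ℝ) with hwdef
  -- classification of outcomes
  have class_a : ∀ o : Out P a, o = oa := by
    rintro ⟨⟨p, k⟩, hpk⟩
    rcases (hdef p a k).1 hpk with ⟨-, h2⟩ | ⟨h1, -⟩ | ⟨h1, -⟩ | ⟨h1, -⟩ | ⟨h1, -⟩ | ⟨h1, -⟩
    · subst h2; exact Subtype.ext (Prod.ext (Fin.fin_one_eq_zero p) rfl)
    · exact absurd h1 hac
    · exact absurd h1 hac
    · exact absurd h1 had
    · exact absurd h1 hab
    · exact absurd h1 had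
  have class_b : ∀ o : Out P b, o = ob := by
    rintro ⟨⟨p, k⟩, hpk⟩
    rcases (hdef p b k).1 hpk with ⟨h1, -⟩ | ⟨h1, -⟩ | ⟨h1, -⟩ | ⟨h1, -⟩ | ⟨-, h2⟩ | ⟨h1, -⟩
    · exact absurd h1.symm hab
    · exact absurd h1 hbc
    · exact absurd h1 hbc
    · exact absurd h1 hbd
    · subst h2; exact Subtype.ext (Prod.ext (Fin.fin_one_eq_zero p) rfl)
    · exact absurd h1 hbd
  have class_c : ∀ o : Out P c, o = oca ∨ o = ocd := by
    rintro ⟨⟨p, k⟩, hpk⟩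
    rcases (hdef p c k).1 hpk with ⟨h1, -⟩ | ⟨-, h2⟩ | ⟨-, h2⟩ | ⟨h1, -⟩ | ⟨h1, -⟩ | ⟨h1, -⟩
    · exact absurd h1.symm hac
    · subst h2; exact Or.inl (Subtype.ext (Prod.ext (Fin.fin_one_eq_zero p) rfl))
    · subst h2; exact Or.inr (Subtype.ext (Prod.ext (Fin.fin_one_eq_zero p) rfl))
    · exact absurd h1 hcd
    · exact absurd h1.symm hbc
    · exact absurd h1 hcd
  have class_d : ∀ o : Out P d, o = odc ∨ o = odb := by
    rintro ⟨⟨p, k⟩, hpk⟩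
    rcases (hdef p d k).1 hpk with ⟨h1, -⟩ | ⟨h1, -⟩ | ⟨h1, -⟩ | ⟨-, h2⟩ | ⟨h1, -⟩ | ⟨-, h2⟩
    · exact absurd h1.symm had
    · exact absurd h1.symm hcd
    · exact absurd h1.symm hcd
    · subst h2; exact Or.inl (Subtype.ext (Prod.ext (Fin.fin_one_eq_zero p) rfl))
    · exact absurd h1.symm hbd
    · subst h2; exact Or.inr (Subtype.ext (Prod.ext (Fin.fin_one_eq_zero p) rfl))
  have hne_ca_cd : oca ≠ ocd := by
    intro h
    exact had (congrArg (fun o => o.1.2) h)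
  have hne_dc_db : odc ≠ odb := by
    intro h
    exact hbc.symm (congrArg (fun o => o.1.2) h)
  -- max wins / losses
  have mw_oa : IsMaxWin P oa := ⟨vac, vca⟩
  have ml_oca : IsMaxLoss P oca := ⟨vca, vac⟩
  have mw_ocd : IsMaxWin P ocd := ⟨vcd, vdc⟩
  have mw_ob : IsMaxWin P ob := ⟨vbd, vdb⟩
  have ml_odc : IsMaxLoss P odc := ⟨vdc, vcd⟩
  have ml_odb : IsMaxLoss P odb := ⟨vdb, vbd⟩
  -- Instance 1: w a > w d  (empty sets)
  have hAD : w a > w d := by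
    refine (hscm a d ∅ ∅ ?_ ?_ emptySetEquiv ?_).2 (Or.inr (Or.inl ⟨oa, Set.notMem_empty _⟩))
    · intro o _; rw [class_a o]; exact mw_oa
    · intro o _; rcases class_d o with h | h <;> rw [h]
      · exact ml_odc
      · exact ml_odb
    · intro o; exact absurd o.2 (Set.notMem_empty _)
  -- Instance 6: w b > w c
  have hBC : w b > w c := by
    refine (hscm b c {ob} {ocd} ?_ ?_ (singSetEquiv ob ocd) ?_).2
      (Or.inr (Or.inr ⟨oca, fun h => hne_ca_cd h⟩))
    · intro o ho; exact absurd (class_b o) ho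
    · intro o ho
      rcases class_c o with h | h
      · rw [h]; exact ml_oca
      · exact absurd h ho
    · rintro ⟨o, ho⟩
      have : o = ob := ho
      subst this
      show NotWeaker P w ob ocd
      exact ⟨ge_of_eq (vbd.trans vcd.symm), le_of_eq (vdb.trans vdc.symm), le_refl _⟩
  -- Instance 5: if w c ≥ w d then w a > w c
  have inst5 : w c ≥ w d → w a > w c := by
    intro hcd'
    refine (hscm a c {oa} {ocd} ?_ ?_ (singSetEquiv oa ocd) ?_).2
      (Or.inr (Or.inr ⟨oca, fun h => hne_ca_cd h⟩))
    · intro o ho; exact absurd (class_a o) ho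
    · intro o ho
      rcases class_c o with h | h
      · rw [h]; exact ml_oca
      · exact absurd h ho
    · rintro ⟨o, ho⟩
      have : o = oa := ho
      subst this
      show NotWeaker P w oa ocd
      exact ⟨ge_of_eq (vac.trans vcd.symm), le_of_eq (vca.trans vdc.symm), hcd'⟩
  -- Instance 3: if w a ≥ w c then w c > w d
  have inst3 : w a ≥ w c → w c > w d := by
    intro hac'
    refine (hscm c d {oca} {odc} ?_ ?_ (singSetEquiv oca odc) ?_).2
      (Or.inr (Or.inr ⟨odb, fun h => hne_dc_db (Set.mem_singleton_iff.mp h).symm⟩))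
    · intro o ho
      rcases class_c o with h | h
      · exact absurd h ho
      · rw [h]; exact mw_ocd
    · intro o ho
      rcases class_d o with h | h
      · exact absurd h ho
      · rw [h]; exact ml_odb
    · rintro ⟨o, ho⟩
      have : o = oca := ho
      subst this
      show NotWeaker P w oca odc
      exact ⟨ge_of_eq (vca.trans vdc.symm), le_of_eq (vac.trans vcd.symm), hac'⟩
  -- Instance 4: if w c > w d then w a > w b
  have inst4 : w c > w d → w a > w b := by
    intro hcd'
    refine (hscm a b {oa} {ob} ?_ ?_ (singSetEquiv oa ob) ?_).2
      (Or.inl ⟨⟨oa, rfl⟩, ?_, Or.inr (Or.inr hcd')⟩)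
    · intro o ho; exact absurd (class_a o) ho
    · intro o ho; exact absurd (class_b o) ho
    · rintro ⟨o, ho⟩
      have : o = oa := ho
      subst this
      show NotWeaker P w oa ob
      exact ⟨ge_of_eq (vac.trans vbd.symm), le_of_eq (vca.trans vdb.symm), le_of_lt hcd'⟩
    · show NotWeaker P w oa ob
      exact ⟨ge_of_eq (vac.trans vbd.symm), le_of_eq (vca.trans vdb.symm), le_of_lt hcd'⟩
  have hAC : w a > w c := by
    rcases le_or_gt (w d) (w c) with h | h
    · exact inst5 h
    · linarith
  have hCD : w c > w d := inst3 (le_of_lt hAC)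
  have hAB : w a > w b := inst4 hCD
  simp only [hwdef] at hAB hBC hCD
  refine ⟨?_, ?_, ?_⟩ <;> [exact_mod_cast hAB; exact_mod_cast hBC; exact_mod_cast hCD]
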